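/- For v in the interior of the second-order cone K ⊆ ℝ^d, and for any w in the interior of K, the truncated cone C(w,v) = {x ∈ K : wᵀx ≤ wᵀv} has volume (wᵀv / √(w_0² - ‖w_1‖²))^d · V_d, where V_d is the volume of the standard truncated cone C(e,e) = {x ∈ K : x_0 ≤ 1}; this is minimized over w exactly at w = (v_0; -v_1), with minimal volume (v_0² - ‖v_1‖²)^{d/2} · V_d. -/

import Mathlib

open scoped BigOperators RealInnerProductSpace
open MeasureTheory

/-- The second-order cone in `ℝ^{n+1}`. -/
def socE (n : ℕ) : Set (EuclideanSpace ℝ (Fin (n + 1))) :=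
  {x | Real.sqrt (∑ j : Fin n, x j.succ ^ 2) ≤ x 0}

/-- The interior of the second-order cone. -/
def socIntE (n : ℕ) : Set (EuclideanSpace ℝ (Fin (n + 1))) :=
  {x | Real.sqrt (∑ j : Fin n, x j.succ ^ 2) < x 0}

/-- The (obliquely) truncated second-order cone `C(w,v) = {x ∈ K : wᵀx ≤ wᵀv}`. -/
def Ctrunc (n : ℕ) (w v : EuclideanSpace ℝ (Fin (n + 1))) :
    Set (EuclideanSpace ℝ (Fin (n + 1))) :=
  {x ∈ socE n | ⟪w, x⟫ ≤ ⟪w, v⟫}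

/-- The unit vector `e = (1; 0)`. -/
noncomputable def eSOC (n : ℕ) : EuclideanSpace ℝ (Fin (n + 1)) :=
  EuclideanSpace.single 0 1

namespace Stmt9Aux

variable {n : ℕ}

/-- tail dot product -/
def Pdot (n : ℕ) (w x : EuclideanSpace ℝ (Fin (n + 1))) : ℝ :=
  ∑ j : Fin n, w j.succ * x j.succ

/-- tail squared norm -/
def Qsum (n : ℕ) (w : EuclideanSpace ℝ (Fin (n + 1))) : ℝ :=
  ∑ j : Fin n, w j.succ ^ 2

lemma Qsum_nonneg (w : EuclideanSpace ℝ (Fin (n+1))) : 0 ≤ Qsum n w :=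
  Finset.sum_nonneg fun j _ => sq_nonneg _

lemma inner_eq_sum (w x : EuclideanSpace ℝ (Fin (n+1))) :
    ⟪w, x⟫ = w 0 * x 0 + Pdot n w x := by
  have : ⟪w, x⟫ = ∑ i, w i * x i := by
    simp [PiLp.inner_apply, RCLike.inner_apply, starRingEnd_apply]
    exact Finset.sum_congr rfl fun i _ => mul_comm _ _
  rw [this, Fin.sum_univ_succ]; rfl

/-- The Lorentz boost associated to `w` (with `s` a stand-in for `√(w₀²-‖w₁‖²)`). -/
noncomputable def boostFun (w : EuclideanSpace ℝ (Fin (n + 1))) (s : ℝ)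
    (x : EuclideanSpace ℝ (Fin (n + 1))) : EuclideanSpace ℝ (Fin (n + 1)) :=
  WithLp.toLp 2 (fun i : Fin (n + 1) => (Fin.cases ((w 0 * x 0 - Pdot n w x) / s)
    (fun j => x j.succ + (Pdot n w x / (s * (w 0 + s)) - x 0 / s) * w j.succ) i : ℝ))

@[simp] lemma boostFun_zero (w : EuclideanSpace ℝ (Fin (n+1))) (s : ℝ) (x) :
    boostFun w s x 0 = (w 0 * x 0 - Pdot n w x) / s := by simp [boostFun]

@[simp] lemma boostFun_succ (w : EuclideanSpace ℝ (Fin (n+1))) (s : ℝ) (x) (j : Fin n) :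
    boostFun w s x j.succ
      = x j.succ + (Pdot n w x / (s * (w 0 + s)) - x 0 / s) * w j.succ := by simp [boostFun]

lemma Pdot_add (w x y : EuclideanSpace ℝ (Fin (n+1))) :
    Pdot n w (x + y) = Pdot n w x + Pdot n w y := by
  simp [Pdot, mul_add, Finset.sum_add_distrib]

lemma Pdot_smul (w : EuclideanSpace ℝ (Fin (n+1))) (c : ℝ) (x) :
    Pdot n w (c • x) = c * Pdot n w x := by
  simp only [Pdot, PiLp.smul_apply, smul_eq_mul, Finset.mul_sum]
  exact Finset.sum_congr rfl fun j _ => by ring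

/-- expansion of the tail dot product against a shifted vector -/
lemma Pdot_shift (w x : EuclideanSpace ℝ (Fin (n+1))) (t : ℝ) :
    ∑ j : Fin n, w j.succ * (x j.succ + t * w j.succ) = Pdot n w x + t * Qsum n w := by
  simp only [Pdot, Qsum, Finset.mul_sum, ← Finset.sum_add_distrib]
  exact Finset.sum_congr rfl fun j _ => by ring

lemma sq_shift (w x : EuclideanSpace ℝ (Fin (n+1))) (t : ℝ) :
    ∑ j : Fin n, (x j.succ + t * w j.succ) ^ 2
      = (∑ j : Fin n, x j.succ ^ 2) + 2 * t * Pdot n w x + t ^ 2 * Qsum n w := by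
  simp only [Pdot, Qsum, Finset.mul_sum, ← Finset.sum_add_distrib]
  exact Finset.sum_congr rfl fun j _ => by ring

/-- The boost as a linear map. -/
noncomputable def boostLin (w : EuclideanSpace ℝ (Fin (n + 1))) (s : ℝ) :
    EuclideanSpace ℝ (Fin (n + 1)) →ₗ[ℝ] EuclideanSpace ℝ (Fin (n + 1)) where
  toFun := boostFun w s
  map_add' x y := by
    ext i
    refine Fin.cases ?_ (fun j => ?_) i <;>
      simp only [boostFun_zero, boostFun_succ, PiLp.add_apply, Pdot_add] <;> ring
  map_smul' c x := by
    ext i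
    refine Fin.cases ?_ (fun j => ?_) i <;>
      simp only [boostFun_zero, boostFun_succ, PiLp.smul_apply, Pdot_smul, smul_eq_mul,
        RingHom.id_apply] <;> ring

@[simp] lemma boostLin_apply (w : EuclideanSpace ℝ (Fin (n+1))) (s : ℝ) (x) :
    boostLin w s x = boostFun w s x := rfl

/-- negation of the tail -/
def negTail (w : EuclideanSpace ℝ (Fin (n + 1))) : EuclideanSpace ℝ (Fin (n + 1)) :=
  WithLp.toLp 2 (fun i : Fin (n + 1) => (Fin.cases (w 0) (fun j => -w j.succ) i : ℝ))

@[simp] lemma negTail_zero (w : EuclideanSpace ℝ (Fin (n+1))) : negTail w 0 = w 0 := by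
  simp [negTail]

@[simp] lemma negTail_succ (w : EuclideanSpace ℝ (Fin (n+1))) (j : Fin n) :
    negTail w j.succ = -w j.succ := by simp [negTail]

@[simp] lemma negTail_negTail (w : EuclideanSpace ℝ (Fin (n+1))) : negTail (negTail w) = w := by
  ext i; refine Fin.cases ?_ (fun j => ?_) i <;> simp

@[simp] lemma Qsum_negTail (w : EuclideanSpace ℝ (Fin (n+1))) : Qsum n (negTail w) = Qsum n w := by
  simp [Qsum]

lemma Pdot_negTail (w x : EuclideanSpace ℝ (Fin (n+1))) :
    Pdot n (negTail w) x = -Pdot n w x := by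
  simp [Pdot, Finset.sum_neg_distrib]

section algebra
variable {w : EuclideanSpace ℝ (Fin (n+1))} {s : ℝ}

/-- Key inner product identity: `⟪w, boost x⟫ = s * x 0`. -/
lemma inner_boost (hs : s ^ 2 = w 0 ^ 2 - Qsum n w) (hs0 : 0 < s) (hw0 : 0 < w 0)
    (x : EuclideanSpace ℝ (Fin (n+1))) :
    ⟪w, boostFun w s x⟫ = s * x 0 := by
  have hws : 0 < w 0 + s := by linarith
  rw [inner_eq_sum]
  have h1 : Pdot n w (boostFun w s x)
      = Pdot n w x + (Pdot n w x / (s * (w 0 + s)) - x 0 / s) * Qsum n w := by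
    rw [Pdot]
    simp only [boostFun_succ]
    exact Pdot_shift w x _
  rw [h1, boostFun_zero]
  have hQ : Qsum n w = w 0 ^ 2 - s ^ 2 := by linarith
  rw [hQ]
  field_simp
  ring

/-- Lorentz invariance of the quadratic form. -/
lemma boost_quad (hs : s ^ 2 = w 0 ^ 2 - Qsum n w) (hs0 : 0 < s) (hw0 : 0 < w 0)
    (x : EuclideanSpace ℝ (Fin (n+1))) :
    (boostFun w s x 0) ^ 2 - ∑ j : Fin n, (boostFun w s x j.succ) ^ 2
      = x 0 ^ 2 - ∑ j : Fin n, x j.succ ^ 2 := by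
  have hws : 0 < w 0 + s := by linarith
  have h1 : ∑ j : Fin n, (boostFun w s x j.succ) ^ 2
      = (∑ j : Fin n, x j.succ ^ 2)
        + 2 * (Pdot n w x / (s * (w 0 + s)) - x 0 / s) * Pdot n w x
        + (Pdot n w x / (s * (w 0 + s)) - x 0 / s) ^ 2 * Qsum n w := by
    simp only [boostFun_succ]
    exact sq_shift w x _
  rw [h1, boostFun_zero]
  have hQ : Qsum n w = w 0 ^ 2 - s ^ 2 := by linarith
  rw [hQ]
  field_simp
  ring

/-- The boost of `w` composed with the boost of `negTail w` is the identity. -/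
lemma boost_boost (hs : s ^ 2 = w 0 ^ 2 - Qsum n w) (hs0 : 0 < s) (hw0 : 0 < w 0)
    (x : EuclideanSpace ℝ (Fin (n+1))) :
    boostFun w s (boostFun (negTail w) s x) = x := by
  have hws : 0 < w 0 + s := by linarith
  have hQ : Qsum n w = w 0 ^ 2 - s ^ 2 := by linarith
  set t : ℝ := Pdot n (negTail w) x / (s * (negTail w 0 + s)) - x 0 / s with ht
  have hgz : boostFun (negTail w) s x 0 = (w 0 * x 0 + Pdot n w x) / s := by
    rw [boostFun_zero, negTail_zero, Pdot_negTail]; ring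
  have hgs : ∀ j : Fin n, boostFun (negTail w) s x j.succ = x j.succ + (-t) * w j.succ := by
    intro j; rw [boostFun_succ, negTail_succ]; ring
  have hP : Pdot n w (boostFun (negTail w) s x) = Pdot n w x + (-t) * Qsum n w := by
    rw [Pdot]
    simp only [hgs]
    exact Pdot_shift w x _
  have htval : t = -Pdot n w x / (s * (w 0 + s)) - x 0 / s := by
    rw [ht, Pdot_negTail, negTail_zero]; try ring
  ext i
  refine Fin.cases ?_ (fun j => ?_) i
  · rw [boostFun_zero, hP, hgz, htval, hQ]
    field_simp
    try ring
  · rw [boostFun_succ, hP, hgz, hgs j, htval, hQ]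
    field_simp
    try ring

/-- The boost preserves the second-order cone. -/
lemma boost_mem_socE (hs : s ^ 2 = w 0 ^ 2 - Qsum n w) (hs0 : 0 < s) (hw : w ∈ socIntE n)
    {x : EuclideanSpace ℝ (Fin (n+1))} (hx : x ∈ socE n) :
    boostFun w s x ∈ socE n := by
  have hw0 : 0 < w 0 := lt_of_le_of_lt (Real.sqrt_nonneg _) hw
  have hx0 : 0 ≤ x 0 := le_trans (Real.sqrt_nonneg _) hx
  -- Cauchy-Schwarz : Pdot ≤ √Q √X ≤ w0 x0
  have hCS : Pdot n w x ≤ Real.sqrt (Qsum n w) * Real.sqrt (∑ j : Fin n, x j.succ ^ 2) :=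
    Real.sum_mul_le_sqrt_mul_sqrt _ _ _
  have hPle : Pdot n w x ≤ w 0 * x 0 := by
    refine le_trans hCS ?_
    exact mul_le_mul (le_of_lt hw) hx (Real.sqrt_nonneg _) (le_of_lt hw0)
  have h0 : 0 ≤ boostFun w s x 0 := by
    rw [boostFun_zero]
    have : 0 ≤ w 0 * x 0 - Pdot n w x := by linarith
    positivity
  have hX : (∑ j : Fin n, x j.succ ^ 2) ≤ x 0 ^ 2 := by
    have h1 : Real.sqrt (∑ j : Fin n, x j.succ ^ 2) ≤ x 0 := hx
    calc (∑ j : Fin n, x j.succ ^ 2)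
        = Real.sqrt (∑ j : Fin n, x j.succ ^ 2) ^ 2 :=
          (Real.sq_sqrt (Finset.sum_nonneg fun j _ => sq_nonneg _)).symm
      _ ≤ x 0 ^ 2 := by nlinarith [Real.sqrt_nonneg (∑ j : Fin n, x j.succ ^ 2)]
  have hquad := boost_quad hs hs0 hw0 x
  have hle : (∑ j : Fin n, (boostFun w s x j.succ) ^ 2) ≤ (boostFun w s x 0) ^ 2 := by
    linarith
  show Real.sqrt (∑ j : Fin n, (boostFun w s x j.succ) ^ 2) ≤ boostFun w s x 0
  calc Real.sqrt (∑ j : Fin n, (boostFun w s x j.succ) ^ 2)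
      ≤ Real.sqrt ((boostFun w s x 0) ^ 2) := Real.sqrt_le_sqrt hle
    _ = boostFun w s x 0 := by rw [Real.sqrt_sq h0]

end algebra

/-- negation of the tail as a linear map -/
def negTailLin (n : ℕ) :
    EuclideanSpace ℝ (Fin (n + 1)) →ₗ[ℝ] EuclideanSpace ℝ (Fin (n + 1)) where
  toFun := negTail
  map_add' x y := by
    ext i
    refine Fin.cases ?_ (fun j => ?_) i <;> simp [PiLp.add_apply] <;> ring
  map_smul' c x := by
    ext i
    refine Fin.cases ?_ (fun j => ?_) i <;> simp [PiLp.smul_apply, smul_eq_mul] <;> ring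

@[simp] lemma negTailLin_apply (x : EuclideanSpace ℝ (Fin (n+1))) :
    negTailLin n x = negTail x := rfl

lemma Pdot_negTail_right (w x : EuclideanSpace ℝ (Fin (n+1))) :
    Pdot n w (negTail x) = -Pdot n w x := by
  simp [Pdot, Finset.sum_neg_distrib]

lemma boost_conj (w : EuclideanSpace ℝ (Fin (n+1))) (s : ℝ)
    (x : EuclideanSpace ℝ (Fin (n+1))) :
    boostFun (negTail w) s x = negTail (boostFun w s (negTail x)) := by
  ext i
  refine Fin.cases ?_ (fun j => ?_) i
  · rw [boostFun_zero, negTail_zero, negTail_zero, Pdot_negTail, boostFun_zero,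
      negTail_zero, Pdot_negTail_right]
    try ring
  · rw [boostFun_succ, negTail_succ, negTail_succ, boostFun_succ, negTail_succ,
      negTail_zero, Pdot_negTail, Pdot_negTail_right, negTail_zero]
    ring

lemma negTailLin_invol : (negTailLin n) ∘ₗ (negTailLin n) = LinearMap.id := by
  apply LinearMap.ext; intro x; simp

lemma boost_det_abs {w : EuclideanSpace ℝ (Fin (n+1))} {s : ℝ}
    (hs : s ^ 2 = w 0 ^ 2 - Qsum n w) (hs0 : 0 < s) (hw0 : 0 < w 0) :
    |LinearMap.det (boostLin w s)| = 1 := by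
  have hcomp : (boostLin w s) ∘ₗ (boostLin (negTail w) s) = LinearMap.id := by
    apply LinearMap.ext; intro x
    simpa using boost_boost hs hs0 hw0 x
  have hconj : boostLin (negTail w) s
      = (negTailLin n) ∘ₗ (boostLin w s) ∘ₗ (negTailLin n) := by
    apply LinearMap.ext; intro x
    simpa using boost_conj w s x
  have h1 : LinearMap.det (boostLin w s) * LinearMap.det (boostLin (negTail w) s) = 1 := by
    rw [← LinearMap.det_comp, hcomp, LinearMap.det_id]
  have hR2 : LinearMap.det (negTailLin n) * LinearMap.det (negTailLin n) = 1 := by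
    rw [← LinearMap.det_comp, negTailLin_invol, LinearMap.det_id]
  have h2 : LinearMap.det (boostLin (negTail w) s)
      = LinearMap.det (negTailLin n) * (LinearMap.det (boostLin w s)
        * LinearMap.det (negTailLin n)) := by
    rw [hconj, LinearMap.det_comp, LinearMap.det_comp]
  have h3 : LinearMap.det (boostLin w s) * LinearMap.det (boostLin w s) = 1 := by
    calc LinearMap.det (boostLin w s) * LinearMap.det (boostLin w s)
        = LinearMap.det (boostLin w s) * LinearMap.det (boostLin w s)
          * (LinearMap.det (negTailLin n) * LinearMap.det (negTailLin n)) := by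
          rw [hR2]; ring
      _ = LinearMap.det (boostLin w s) * (LinearMap.det (negTailLin n)
          * (LinearMap.det (boostLin w s) * LinearMap.det (negTailLin n))) := by ring
      _ = LinearMap.det (boostLin w s) * LinearMap.det (boostLin (negTail w) s) := by
          rw [← h2]
      _ = 1 := h1
  rcases mul_self_eq_one_iff.mp h3 with h | h <;> rw [h] <;> norm_num

lemma socE_smul {c : ℝ} (hc : 0 ≤ c) {x : EuclideanSpace ℝ (Fin (n+1))}
    (hx : x ∈ socE n) : c • x ∈ socE n := by
  have h1 : ∑ j : Fin n, ((c • x) j.succ) ^ 2 = c ^ 2 * ∑ j : Fin n, x j.succ ^ 2 := by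
    rw [Finset.mul_sum]
    exact Finset.sum_congr rfl fun j _ => by simp [PiLp.smul_apply, smul_eq_mul]; ring
  show Real.sqrt (∑ j : Fin n, ((c • x) j.succ) ^ 2) ≤ (c • x) 0
  rw [h1, Real.sqrt_mul (sq_nonneg c), Real.sqrt_sq hc]
  have : (c • x) 0 = c * x 0 := by simp [PiLp.smul_apply, smul_eq_mul]
  rw [this]
  exact mul_le_mul_of_nonneg_left hx hc

lemma mem_Ctrunc_e (x : EuclideanSpace ℝ (Fin (n+1))) :
    x ∈ Ctrunc n (eSOC n) (eSOC n) ↔ x ∈ socE n ∧ x 0 ≤ 1 := by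
  have h1 : ⟪eSOC n, x⟫ = x 0 := by
    simp [eSOC, EuclideanSpace.inner_single_left]
  have h2 : ⟪eSOC n, eSOC n⟫ = (1:ℝ) := by
    simp [eSOC, EuclideanSpace.inner_single_left, EuclideanSpace.single_apply]
  constructor
  · rintro ⟨hx, hle⟩; exact ⟨hx, by rwa [h1, h2] at hle⟩
  · rintro ⟨hx, hle⟩; exact ⟨hx, by rwa [h1, h2]⟩

/-- the fundamental lower bound `√(w₀²-‖w₁‖²)·√(v₀²-‖v₁‖²) ≤ ⟪w,v⟫`. -/
lemma inner_lower {w v : EuclideanSpace ℝ (Fin (n+1))}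
    (hw : w ∈ socIntE n) (hv : v ∈ socIntE n) :
    Real.sqrt (w 0 ^ 2 - Qsum n w) * Real.sqrt (v 0 ^ 2 - Qsum n v) ≤ ⟪w, v⟫
      ∧ 0 < ⟪w, v⟫ := by
  set a := Real.sqrt (∑ j : Fin n, w j.succ ^ 2) with ha
  set b := Real.sqrt (∑ j : Fin n, v j.succ ^ 2) with hb
  have ha0 : 0 ≤ a := Real.sqrt_nonneg _
  have hb0 : 0 ≤ b := Real.sqrt_nonneg _
  have ha2 : a ^ 2 = Qsum n w := Real.sq_sqrt (Qsum_nonneg w)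
  have hb2 : b ^ 2 = Qsum n v := Real.sq_sqrt (Qsum_nonneg v)
  have haw : a < w 0 := hw
  have hbv : b < v 0 := hv
  have hw0 : 0 < w 0 := lt_of_le_of_lt ha0 haw
  have hv0 : 0 < v 0 := lt_of_le_of_lt hb0 hbv
  have hCS : -Pdot n w v ≤ a * b := by
    have h := Real.sum_mul_le_sqrt_mul_sqrt Finset.univ
      (fun j : Fin n => -(w j.succ)) (fun j : Fin n => v j.succ)
    simp only [neg_mul, Finset.sum_neg_distrib, neg_sq] at h
    rw [← ha, ← hb] at h
    exact h
  have hab : a * b < w 0 * v 0 := by nlinarith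
  have key : Real.sqrt (w 0 ^ 2 - a ^ 2) * Real.sqrt (v 0 ^ 2 - b ^ 2)
      ≤ w 0 * v 0 - a * b := by
    have h2 : (w 0 ^ 2 - a ^ 2) * (v 0 ^ 2 - b ^ 2) ≤ (w 0 * v 0 - a * b) ^ 2 := by
      nlinarith [sq_nonneg (w 0 * b - v 0 * a)]
    calc Real.sqrt (w 0 ^ 2 - a ^ 2) * Real.sqrt (v 0 ^ 2 - b ^ 2)
        = Real.sqrt ((w 0 ^ 2 - a ^ 2) * (v 0 ^ 2 - b ^ 2)) :=
          (Real.sqrt_mul (by nlinarith) _).symm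
      _ ≤ Real.sqrt ((w 0 * v 0 - a * b) ^ 2) := Real.sqrt_le_sqrt h2
      _ = w 0 * v 0 - a * b := Real.sqrt_sq (by linarith)
  rw [inner_eq_sum]
  constructor
  · rw [← ha2, ← hb2]; linarith
  · linarith

lemma negTail_mem_socIntE {w : EuclideanSpace ℝ (Fin (n+1))} (hw : w ∈ socIntE n) :
    negTail w ∈ socIntE n := by
  show Real.sqrt (∑ j : Fin n, (negTail w j.succ) ^ 2) < negTail w 0
  simp only [negTail_succ, negTail_zero, neg_sq]
  exact hw

/-- Main volume formula. -/
lemma vol_formula {v : EuclideanSpace ℝ (Fin (n+1))} (hv : v ∈ socIntE n)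
    {w : EuclideanSpace ℝ (Fin (n+1))} (hw : w ∈ socIntE n) :
    volume (Ctrunc n w v) =
      ENNReal.ofReal
          ((⟪w, v⟫ / Real.sqrt (w 0 ^ 2 - ∑ j : Fin n, w j.succ ^ 2)) ^ (n + 1)) *
        volume (Ctrunc n (eSOC n) (eSOC n)) := by
  have hw0 : 0 < w 0 := lt_of_le_of_lt (Real.sqrt_nonneg _) hw
  have hQlt : Qsum n w < w 0 ^ 2 := by
    have h1 : Real.sqrt (Qsum n w) < w 0 := hw
    nlinarith [Real.sq_sqrt (Qsum_nonneg w), Real.sqrt_nonneg (Qsum n w)]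
  set s := Real.sqrt (w 0 ^ 2 - Qsum n w) with hsdef
  have hs0 : 0 < s := Real.sqrt_pos.mpr (by linarith)
  have hs : s ^ 2 = w 0 ^ 2 - Qsum n w := Real.sq_sqrt (by linarith)
  obtain ⟨hlow, hα⟩ := inner_lower hw hv
  set α := ⟪w, v⟫ with hαdef
  set c := α / s with hcdef
  have hc : 0 < c := div_pos hα hs0
  set M := c • (boostLin w s) with hMdef
  -- the image identity
  have hwneg := negTail_mem_socIntE hw
  have hsneg : s ^ 2 = (negTail w) 0 ^ 2 - Qsum n (negTail w) := by
    rw [negTail_zero, Qsum_negTail]; exact hs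
  have him : Ctrunc n w v = ⇑M '' (Ctrunc n (eSOC n) (eSOC n)) := by
    ext y
    constructor
    · intro hy
      obtain ⟨hy1, hy2⟩ := hy
      refine ⟨(s / α) • boostFun (negTail w) s y, ?_, ?_⟩
      · rw [mem_Ctrunc_e]
        have hGy : boostFun (negTail w) s y ∈ socE n := boost_mem_socE hsneg hs0 hwneg hy1
        constructor
        · exact socE_smul (le_of_lt (div_pos hs0 hα)) hGy
        · have hFG : boostFun w s (boostFun (negTail w) s y) = y := boost_boost hs hs0 hw0 y
          have h2 : s * (boostFun (negTail w) s y) 0 = ⟪w, y⟫ := by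
            have := inner_boost hs hs0 hw0 (boostFun (negTail w) s y)
            rw [hFG] at this
            exact this.symm
          have h3 : ((s / α) • boostFun (negTail w) s y) 0
              = (s * (boostFun (negTail w) s y) 0) / α := by
            simp [PiLp.smul_apply, smul_eq_mul]; ring
          rw [h3, h2]
          exact div_le_one_of_le₀ hy2 (le_of_lt hα)
      · rw [hMdef]
        have : (c • (boostLin w s)) ((s / α) • boostFun (negTail w) s y)
            = (c * (s / α)) • boostFun w s (boostFun (negTail w) s y) := by
          simp [LinearMap.smul_apply, _root_.map_smul, smul_smul]
          ring_nf
        rw [this, boost_boost hs hs0 hw0 y, hcdef]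
        have hone : α / s * (s / α) = 1 := by
          field_simp
        rw [hone, one_smul]
    · rintro ⟨x, hx, rfl⟩
      rw [mem_Ctrunc_e] at hx
      obtain ⟨hx1, hx2⟩ := hx
      have hMx : M x = c • boostFun w s x := by rw [hMdef]; simp
      constructor
      · rw [hMx]; exact socE_smul (le_of_lt hc) (boost_mem_socE hs hs0 hw hx1)
      · rw [hMx, inner_smul_right, inner_boost hs hs0 hw0 x]
        calc c * (s * x 0) = α * x 0 := by rw [hcdef]; field_simp
          _ ≤ α * 1 := by
            have hx00 : 0 ≤ x 0 := le_trans (Real.sqrt_nonneg _) hx1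
            exact mul_le_mul_of_nonneg_left hx2 (le_of_lt hα)
          _ = ⟪w, v⟫ := by rw [mul_one]
  have hdet : |LinearMap.det M| = c ^ (n + 1) := by
    rw [hMdef, LinearMap.det_smul, abs_mul, abs_pow, boost_det_abs hs hs0 hw0,
      finrank_euclideanSpace, Fintype.card_fin, abs_of_pos hc, mul_one]
  rw [him, Measure.addHaar_image_linearMap, hdet]
  have : (∑ j : Fin n, w j.succ ^ 2) = Qsum n w := rfl
  rw [this]

lemma Pdot_self (v : EuclideanSpace ℝ (Fin (n+1))) : Pdot n v v = Qsum n v :=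
  Finset.sum_congr rfl fun j _ => by ring

lemma inner_negTail_self (v : EuclideanSpace ℝ (Fin (n+1))) :
    ⟪negTail v, v⟫ = v 0 ^ 2 - Qsum n v := by
  rw [inner_eq_sum, negTail_zero, Pdot_negTail, Pdot_self]; ring

lemma sqrt_negTail (v : EuclideanSpace ℝ (Fin (n+1))) :
    Real.sqrt ((negTail v) 0 ^ 2 - ∑ j : Fin n, (negTail v) j.succ ^ 2)
      = Real.sqrt (v 0 ^ 2 - Qsum n v) := by
  simp only [negTail_zero, negTail_succ, neg_sq]; rfl

lemma ratio_negTail {v : EuclideanSpace ℝ (Fin (n+1))} (hv : v ∈ socIntE n) :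
    ⟪negTail v, v⟫
        / Real.sqrt ((negTail v) 0 ^ 2 - ∑ j : Fin n, (negTail v) j.succ ^ 2)
      = Real.sqrt (v 0 ^ 2 - Qsum n v) := by
  rw [sqrt_negTail, inner_negTail_self, Real.div_sqrt]

lemma Qlt_of_mem {v : EuclideanSpace ℝ (Fin (n+1))} (hv : v ∈ socIntE n) :
    Qsum n v < v 0 ^ 2 := by
  have h1 : Real.sqrt (Qsum n v) < v 0 := hv
  nlinarith [Real.sq_sqrt (Qsum_nonneg v), Real.sqrt_nonneg (Qsum n v)]

end Stmt9Aux

open Stmt9Aux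

/-- for interior `v` and any interior `w`,
`vol C(w,v) = (wᵀv/√(w₀²-‖w₁‖²))^d ⬝ V_d`, minimized exactly at `w* = (v₀; -v₁)` with
minimal value `(v₀² - ‖v₁‖²)^{d/2} ⬝ V_d`. -/
theorem stmt9 (n : ℕ) (v : EuclideanSpace ℝ (Fin (n + 1))) (hv : v ∈ socIntE n)
    (wstar : EuclideanSpace ℝ (Fin (n + 1)))
    (hwstar : wstar = WithLp.toLp 2 (fun i : Fin (n + 1) => (Fin.cases (v 0) (fun j => -v j.succ) i : ℝ))) :
    (∀ w ∈ socIntE n,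
      volume (Ctrunc n w v) =
        ENNReal.ofReal
            ((⟪w, v⟫ / Real.sqrt (w 0 ^ 2 - ∑ j : Fin n, w j.succ ^ 2)) ^ (n + 1)) *
          volume (Ctrunc n (eSOC n) (eSOC n))) ∧
    (∀ w ∈ socIntE n, volume (Ctrunc n wstar v) ≤ volume (Ctrunc n w v)) ∧
    volume (Ctrunc n wstar v) =
      ENNReal.ofReal ((v 0 ^ 2 - ∑ j : Fin n, v j.succ ^ 2) ^ (((n : ℝ) + 1) / 2)) *
        volume (Ctrunc n (eSOC n) (eSOC n)) := by
  have hws : wstar = negTail v := hwstar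
  have hA : 0 < v 0 ^ 2 - Qsum n v := by have := Qlt_of_mem hv; linarith
  have hstar : volume (Ctrunc n wstar v)
      = ENNReal.ofReal ((Real.sqrt (v 0 ^ 2 - Qsum n v)) ^ (n + 1)) *
        volume (Ctrunc n (eSOC n) (eSOC n)) := by
    rw [hws, vol_formula hv (negTail_mem_socIntE hv), ratio_negTail hv]
  refine ⟨fun w hw => vol_formula hv hw, fun w hw => ?_, ?_⟩
  · rw [hstar, vol_formula hv hw]
    refine mul_le_mul_left (ENNReal.ofReal_le_ofReal ?_) _
    refine pow_le_pow_left₀ (Real.sqrt_nonneg _) ?_ _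
    obtain ⟨hlow, hpos⟩ := inner_lower hw hv
    have hQltw := Qlt_of_mem hw
    have hs0 : 0 < Real.sqrt (w 0 ^ 2 - Qsum n w) := Real.sqrt_pos.mpr (by linarith)
    have hq : (∑ j : Fin n, w j.succ ^ 2) = Qsum n w := rfl
    rw [hq, le_div_iff₀ hs0]
    calc Real.sqrt (v 0 ^ 2 - Qsum n v) * Real.sqrt (w 0 ^ 2 - Qsum n w)
        = Real.sqrt (w 0 ^ 2 - Qsum n w) * Real.sqrt (v 0 ^ 2 - Qsum n v) := by ring
      _ ≤ ⟪w, v⟫ := hlow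
  · rw [hstar]
    congr 1
    have hsum : (∑ j : Fin n, v j.succ ^ 2) = Qsum n v := rfl
    rw [hsum, Real.sqrt_eq_rpow,
      ← Real.rpow_natCast ((v 0 ^ 2 - Qsum n v) ^ ((1:ℝ)/2)) (n+1),
      ← Real.rpow_mul hA.le]
    congr 1
    push_cast
    ring
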